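/- Let X ⊆ ℝ^n be a finite set with |X| = k, with the metric induced by the 1-norm. For any real coefficients α_x (x ∈ X) with ∑_x α_x = 1, one has ∑_{x,y ∈ X} α_x α_y ‖x - y‖₁ ≤ (k/4) · D(X), where D(X) is the diameter of X. -/

import Mathlib

private lemma two_s_one_sub_s (s : ℝ) : 2 * (s * (1 - s)) ≤ 1 / 2 := by
  nlinarith [sq_nonneg (2 * s - 1)]

private lemma oneD {ι : Type*} (S : Finset ι) (α : ι → ℝ) (b : ℝ)
    (hsum : ∑ x ∈ S, α x = 1) :
    ∀ (m : ℕ) (f : ι → ℝ) (a : ℝ), (S.image f).card ≤ m →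
      (∀ x ∈ S, a ≤ f x ∧ f x ≤ b) →
      ∑ x ∈ S, ∑ y ∈ S, α x * α y * |f x - f y| ≤ (b - a) / 2 := by
  classical
  intro m
  induction m with
  | zero =>
    intro f a hcard _
    have hS : S = ∅ := by
      rw [← Finset.image_eq_empty (f := f), ← Finset.card_eq_zero]
      omega
    rw [hS] at hsum; simp at hsum
  | succ m ih =>
    intro f a hcard hbound
    rcases S.eq_empty_or_nonempty with rfl | hS
    · simp at hsum
    have hVne : (S.image f).Nonempty := hS.image f
    obtain ⟨x0, hx0⟩ := hS
    have hab : a ≤ b := le_trans (hbound x0 hx0).1 (hbound x0 hx0).2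
    by_cases hone : (S.image f).card ≤ 1
    · have hzero : ∑ x ∈ S, ∑ y ∈ S, α x * α y * |f x - f y| = 0 := by
        apply Finset.sum_eq_zero; intro x hx
        apply Finset.sum_eq_zero; intro y hy
        have : f x = f y :=
          Finset.card_le_one.mp hone _ (Finset.mem_image_of_mem f hx) _
            (Finset.mem_image_of_mem f hy)
        simp [this]
      rw [hzero]; linarith
    · push_neg at hone
      set V := S.image f with hV
      set m0 := V.min' hVne with hm0
      have hTne : (V.erase m0).Nonempty := by
        apply Finset.card_pos.mp
        rw [Finset.card_erase_of_mem (V.min'_mem hVne)]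
        omega
      set v := (V.erase m0).min' hTne with hv
      have hvV : v ∈ V := Finset.mem_of_mem_erase ((V.erase m0).min'_mem hTne)
      have hvne : v ≠ m0 := Finset.ne_of_mem_erase ((V.erase m0).min'_mem hTne)
      have hm0v : m0 < v := lt_of_le_of_ne (V.min'_le v hvV) (Ne.symm hvne)
      have ham0 : a ≤ m0 := by
        obtain ⟨x, hx, hfx⟩ := Finset.mem_image.mp (V.min'_mem hVne)
        rw [hm0, ← hfx]; exact (hbound x hx).1
      have hvb : v ≤ b := by
        obtain ⟨x, hx, hfx⟩ := Finset.mem_image.mp hvV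
        rw [← hfx]; exact (hbound x hx).2
      have hlow : ∀ x ∈ S, f x ≠ m0 → v ≤ f x := by
        intro x hx hne
        exact (V.erase m0).min'_le _ (Finset.mem_erase.mpr ⟨hne, Finset.mem_image_of_mem f hx⟩)
      set f' : ι → ℝ := fun x => if f x = m0 then v else f x with hf'
      set L : ι → ℝ := fun x => if f x = m0 then 1 else 0 with hL
      set H : ι → ℝ := fun x => 1 - L x with hH
      set s := ∑ x ∈ S, α x * L x with hs
      have hts : ∑ x ∈ S, α x * H x = 1 - s := by
        simp only [hH, mul_sub, mul_one, Finset.sum_sub_distrib, hsum, hs]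
      set A : ι → ι → ℝ := fun x y => α x * α y * |f' x - f' y| with hA
      set B : ι → ι → ℝ := fun x y =>
        (α x * L x) * (α y * H y) + (α x * H x) * (α y * L y) with hB
      have hiden : ∀ x ∈ S, ∀ y ∈ S, α x * α y * |f x - f y| =
          A x y + (v - m0) * B x y := by
        intro x hx y hy
        by_cases hfx : f x = m0 <;> by_cases hfy : f y = m0
        · simp [hA, hB, hf', hL, hH, hfx, hfy]
        · have h1 : v ≤ f y := hlow y hy hfy
          have e1 : |f x - f y| = f y - m0 := by rw [hfx, abs_of_nonpos (by linarith)]; ring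
          have e2 : |f' x - f' y| = f y - v := by
            simp only [hf', if_pos hfx, if_neg hfy]
            rw [abs_of_nonpos (by linarith)]; ring
          simp only [hA, hB, hL, hH, if_pos hfx, if_neg hfy, e1, e2]; ring
        · have h1 : v ≤ f x := hlow x hx hfx
          have e1 : |f x - f y| = f x - m0 := by rw [hfy, abs_of_nonneg (by linarith)]
          have e2 : |f' x - f' y| = f x - v := by
            simp only [hf', if_neg hfx, if_pos hfy]
            rw [abs_of_nonneg (by linarith)]
          simp only [hA, hB, hL, hH, if_neg hfx, if_pos hfy, e1, e2]; ring
        · simp only [hA, hB, hf', hL, hH, if_neg hfx, if_neg hfy]; ring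
      have hprod : ∑ x ∈ S, ∑ y ∈ S, B x y = s * (1 - s) + (1 - s) * s := by
        simp only [hB]
        rw [Finset.sum_congr rfl (fun x _ => Finset.sum_add_distrib), Finset.sum_add_distrib,
          ← Finset.sum_mul_sum, ← Finset.sum_mul_sum, hts]
      have hkey : ∑ x ∈ S, ∑ y ∈ S, α x * α y * |f x - f y| =
          (∑ x ∈ S, ∑ y ∈ S, A x y) + (v - m0) * (2 * (s * (1 - s))) := by
        rw [Finset.sum_congr rfl
          (fun x hx => Finset.sum_congr rfl (fun y hy => hiden x hx y hy))]
        rw [Finset.sum_congr rfl (fun x _ => Finset.sum_add_distrib), Finset.sum_add_distrib,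
          Finset.sum_congr rfl (fun x _ => (Finset.mul_sum S _ (v - m0)).symm),
          ← Finset.mul_sum, hprod]
        ring
      have himg : S.image f' ⊆ V.erase m0 := by
        intro z hz
        obtain ⟨x, hx, rfl⟩ := Finset.mem_image.mp hz
        by_cases hfx : f x = m0
        · simp only [hf', if_pos hfx]
          exact Finset.mem_erase.mpr ⟨hvne, hvV⟩
        · simp only [hf', if_neg hfx]
          exact Finset.mem_erase.mpr ⟨hfx, Finset.mem_image_of_mem f hx⟩
      have hcard' : (S.image f').card ≤ m := by
        have h1 := Finset.card_le_card himg
        rw [Finset.card_erase_of_mem (V.min'_mem hVne)] at h1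
        omega
      have hbound' : ∀ x ∈ S, v ≤ f' x ∧ f' x ≤ b := by
        intro x hx
        by_cases hfx : f x = m0
        · simp only [hf', if_pos hfx]; exact ⟨le_refl v, hvb⟩
        · simp only [hf', if_neg hfx]; exact ⟨hlow x hx hfx, (hbound x hx).2⟩
      have hIH := ih f' v hcard' hbound'
      have hBle : (v - m0) * (2 * (s * (1 - s))) ≤ (v - m0) * (1 / 2) :=
        mul_le_mul_of_nonneg_left (two_s_one_sub_s s) (by linarith)
      rw [hkey]
      simp only [hA] at hIH ⊢
      linarith
private lemma telescope (c : ℕ → ℝ) (t k : ℕ) (ht : t ≤ k) (hper : c k = c 0) :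
    2 * (c t - c 0) ≤ ∑ m ∈ Finset.range k, |c (m + 1) - c m| := by
  have h1 : ∑ m ∈ Finset.range t, (c (m + 1) - c m) = c t - c 0 :=
    Finset.sum_range_sub c t
  have hsplit : (∑ m ∈ Finset.Ico 0 t, |c (m + 1) - c m|) +
      ∑ m ∈ Finset.Ico t k, |c (m + 1) - c m| = ∑ m ∈ Finset.Ico 0 k, |c (m + 1) - c m| :=
    Finset.sum_Ico_consecutive _ (Nat.zero_le t) ht
  have h2 : ∑ m ∈ Finset.Ico t k, (c (m + 1) - c m) = c k - c t := by
    rw [Finset.sum_Ico_eq_sub _ ht, Finset.sum_range_sub c, Finset.sum_range_sub c]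
    ring
  have hA : c t - c 0 ≤ ∑ m ∈ Finset.range t, |c (m + 1) - c m| := by
    rw [← h1]
    exact le_trans (le_abs_self _) (Finset.abs_sum_le_sum_abs _ _)
  have hBabs : |c k - c t| ≤ ∑ m ∈ Finset.Ico t k, |c (m + 1) - c m| := by
    rw [← h2]
    exact Finset.abs_sum_le_sum_abs _ _
  have hB : c t - c 0 ≤ ∑ m ∈ Finset.Ico t k, |c (m + 1) - c m| := by
    have h3 : c t - c 0 = -(c k - c t) := by rw [hper]; ring
    rw [h3]
    exact le_trans (neg_le_abs _) hBabs
  rw [Finset.range_eq_Ico]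
  rw [Finset.range_eq_Ico] at hA
  linarith
open Fin.NatCast in
private lemma cyclic {k : ℕ} [NeZero k] (c : Fin k → ℝ) (a b : Fin k) :
    2 * (c b - c a) ≤ ∑ j : Fin k, |c (j + 1) - c j| := by
  set c' : ℕ → ℝ := fun m => c (a + (m : Fin k)) with hc'
  have hper : c' k = c' 0 := by simp [hc']
  have hb : c' ((b - a).val) = c b := by
    simp only [hc', Fin.cast_val_eq_self]
    congr 1
    rw [add_comm, sub_add_cancel]
  have h0 : c' 0 = c a := by simp [hc']
  have htel := telescope c' (b - a).val k (le_of_lt (Fin.is_lt _)) hper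
  rw [hb, h0] at htel
  have hsum : ∑ m ∈ Finset.range k, |c' (m + 1) - c' m| = ∑ j : Fin k, |c (j + 1) - c j| := by
    rw [← Fin.sum_univ_eq_sum_range (fun m => |c' (m + 1) - c' m|) k]
    rw [← Equiv.sum_comp (Equiv.addLeft a) (fun j => |c (j + 1) - c j|)]
    apply Finset.sum_congr rfl
    intro j _
    simp only [hc', Equiv.coe_addLeft]
    push_cast [Fin.cast_val_eq_self]
    rw [add_assoc]
  rw [← hsum]
  exact htel
theorem stmt_7 (n : ℕ) (X : Finset (PiLp 1 fun _ : Fin n => ℝ))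
    (α : (PiLp 1 fun _ : Fin n => ℝ) → ℝ)
    (hsum : ∑ x ∈ X, α x = 1) :
    ∑ x ∈ X, ∑ y ∈ X, α x * α y * ‖x - y‖ ≤
      ((X.card : ℝ) / 4) * Metric.diam (X : Set (PiLp 1 fun _ : Fin n => ℝ)) := by
  classical
  rcases X.eq_empty_or_nonempty with rfl | hXne
  · simp at hsum
  have hnorm : ∀ x y : PiLp 1 fun _ : Fin n => ℝ, ‖x - y‖ = ∑ i, |x i - y i| := by
    intro x y
    rw [PiLp.norm_eq_sum (by norm_num)]
    simp [Real.norm_eq_abs]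
  set k := X.card with hk
  haveI : NeZero k := ⟨(Finset.card_pos.mpr hXne).ne'⟩
  set p : Fin k → (PiLp 1 fun _ : Fin n => ℝ) := fun j => (X.equivFin.symm j : _) with hp
  have hpmem : ∀ j, p j ∈ X := fun j => (X.equivFin.symm j).2
  have hdiam : ∀ x ∈ X, ∀ y ∈ X, ‖x - y‖ ≤
      Metric.diam (X : Set (PiLp 1 fun _ : Fin n => ℝ)) := by
    intro x hx y hy
    have := Metric.dist_le_diam_of_mem (Set.Finite.isBounded (X.finite_toSet)) hx hy
    rwa [dist_eq_norm] at this
  set a : Fin n → ℝ := fun i => X.inf' hXne (fun x => x i) with ha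
  set b : Fin n → ℝ := fun i => X.sup' hXne (fun x => x i) with hb
  have step1 : ∀ i : Fin n, ∑ x ∈ X, ∑ y ∈ X, α x * α y * |x i - y i| ≤ (b i - a i) / 2 := by
    intro i
    apply oneD X α (b i) hsum (X.image (fun x => x i)).card (fun x => x i) (a i) le_rfl
    intro x hx
    exact ⟨Finset.inf'_le (fun x => x i) hx, Finset.le_sup' (fun x => x i) hx⟩
  have step2 : ∀ i : Fin n, 2 * (b i - a i) ≤ ∑ j : Fin k, |p (j + 1) i - p j i| := by
    intro i
    obtain ⟨xb, hxb, hxbv⟩ := X.exists_mem_eq_sup' hXne (fun x => x i)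
    obtain ⟨xa, hxa, hxav⟩ := X.exists_mem_eq_inf' hXne (fun x => x i)
    have hbv : b i = p (X.equivFin ⟨xb, hxb⟩) i := by
      simp only [hp, Equiv.symm_apply_apply]; exact hxbv
    have hav : a i = p (X.equivFin ⟨xa, hxa⟩) i := by
      simp only [hp, Equiv.symm_apply_apply]; exact hxav
    rw [hbv, hav]
    exact cyclic (fun j => p j i) _ _
  have step3 : 2 * ∑ i : Fin n, (b i - a i) ≤ ∑ j : Fin k, ‖p (j + 1) - p j‖ := by
    rw [Finset.mul_sum]
    calc ∑ i : Fin n, 2 * (b i - a i)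
        ≤ ∑ i : Fin n, ∑ j : Fin k, |p (j + 1) i - p j i| :=
          Finset.sum_le_sum (fun i _ => step2 i)
      _ = ∑ j : Fin k, ∑ i : Fin n, |p (j + 1) i - p j i| := Finset.sum_comm
      _ = ∑ j : Fin k, ‖p (j + 1) - p j‖ := by
          apply Finset.sum_congr rfl; intro j _; rw [hnorm]
  have step4 : ∑ j : Fin k, ‖p (j + 1) - p j‖ ≤
      (k : ℝ) * Metric.diam (X : Set (PiLp 1 fun _ : Fin n => ℝ)) := by
    calc ∑ j : Fin k, ‖p (j + 1) - p j‖
        ≤ ∑ _j : Fin k, Metric.diam (X : Set (PiLp 1 fun _ : Fin n => ℝ)) :=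
          Finset.sum_le_sum (fun j _ => hdiam _ (hpmem _) _ (hpmem _))
      _ = (k : ℝ) * Metric.diam (X : Set (PiLp 1 fun _ : Fin n => ℝ)) := by
          rw [Finset.sum_const, Finset.card_univ, Fintype.card_fin, nsmul_eq_mul]
  have hswap : ∑ x ∈ X, ∑ y ∈ X, α x * α y * ‖x - y‖
      = ∑ i : Fin n, ∑ x ∈ X, ∑ y ∈ X, α x * α y * |x i - y i| := by
    calc ∑ x ∈ X, ∑ y ∈ X, α x * α y * ‖x - y‖
        = ∑ x ∈ X, ∑ y ∈ X, ∑ i : Fin n, α x * α y * |x i - y i| := by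
          apply Finset.sum_congr rfl; intro x _
          apply Finset.sum_congr rfl; intro y _
          rw [hnorm, Finset.mul_sum]
      _ = ∑ x ∈ X, ∑ i : Fin n, ∑ y ∈ X, α x * α y * |x i - y i| :=
          Finset.sum_congr rfl (fun x _ => Finset.sum_comm)
      _ = ∑ i : Fin n, ∑ x ∈ X, ∑ y ∈ X, α x * α y * |x i - y i| := Finset.sum_comm
  rw [hswap]
  have hfinal : ∑ i : Fin n, ∑ x ∈ X, ∑ y ∈ X, α x * α y * |x i - y i|
      ≤ ∑ i : Fin n, (b i - a i) / 2 := Finset.sum_le_sum (fun i _ => step1 i)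
  have hsum2 : ∑ i : Fin n, (b i - a i) / 2 = (∑ i : Fin n, (b i - a i)) / 2 :=
    (Finset.sum_div _ _ _).symm
  linarith
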